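/- For the identical-decision-number strategy on n draws (decision number k ∈ [0,1] for rounds 1 through n-1, and 0 for round n), the probability of winning at round r (for 1 ≤ r ≤ n-1) equals k^{r-1}/(n-r+1) - k^n/(n-r+1), and the probability of winning at round n equals k^{n-1} - (n-1)·k^n/n. -/

import Mathlib

open MeasureTheory

open Set

lemma mu0_Iic {c : ℝ} (h0 : 0 ≤ c) (h1 : c ≤ 1) :
    (volume : Measure ℝ).restrict (Set.Icc 0 1) (Set.Iic c) = ENNReal.ofReal c := by
  rw [Measure.restrict_apply measurableSet_Iic]
  have : Set.Iic c ∩ Set.Icc 0 1 = Set.Icc 0 c := by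
    ext x
    simp only [Set.mem_inter_iff, Set.mem_Iic, Set.mem_Icc]
    constructor
    · rintro ⟨h, h2, _⟩; exact ⟨h2, h⟩
    · rintro ⟨h2, h⟩; exact ⟨h, h2, h.trans h1⟩
  rw [this, Real.volume_Icc, sub_zero]

lemma mu0_Iio {c : ℝ} (h0 : 0 ≤ c) (h1 : c ≤ 1) :
    (volume : Measure ℝ).restrict (Set.Icc 0 1) (Set.Iio c) = ENNReal.ofReal c := by
  rw [Measure.restrict_apply measurableSet_Iio]
  have : Set.Iio c ∩ Set.Icc 0 1 = Set.Ico 0 c := by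
    ext x
    simp only [Set.mem_inter_iff, Set.mem_Iio, Set.mem_Icc, Set.mem_Ico]
    constructor
    · rintro ⟨h, h2, _⟩; exact ⟨h2, h⟩
    · rintro ⟨h2, h⟩; exact ⟨h, h2, h.le.trans h1⟩
  rw [this, Real.volume_Ico, sub_zero]

lemma pi_slice {N : ℕ} (i : Fin (N + 1)) {A : Set (Fin (N + 1) → ℝ)} (hA : MeasurableSet A) :
    (Measure.pi fun _ : Fin (N + 1) => (volume : Measure ℝ).restrict (Set.Icc 0 1)) A
      = ∫⁻ x in Set.Icc (0:ℝ) 1,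
          (Measure.pi fun _ : Fin N => (volume : Measure ℝ).restrict (Set.Icc 0 1))
            {y | i.insertNth x y ∈ A} := by
  have hmp := (measurePreserving_piFinSuccAbove
    (fun _ : Fin (N+1) => (volume : Measure ℝ).restrict (Set.Icc 0 1)) i).symm
  rw [← hmp.measure_preimage hA.nullMeasurableSet,
    Measure.prod_apply ((MeasurableEquiv.piFinSuccAbove (fun _ => ℝ) i).symm.measurable hA)]
  refine lintegral_congr fun x => ?_
  congr 1

lemma prod_ite_lt (N t : ℕ) (ht : t ≤ N) (a b : ENNReal) :
    (∏ j : Fin N, if (j : ℕ) < t then a else b) = a ^ t * b ^ (N - t) := by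
  rw [Fin.prod_univ_eq_prod_range (fun j => if j < t then a else b),
    ← Finset.prod_range_mul_prod_Ico _ ht]
  congr 1
  · rw [Finset.prod_congr rfl (fun x hx => if_pos (Finset.mem_range.1 hx)),
      Finset.prod_const, Finset.card_range]
  · rw [Finset.prod_congr rfl (fun x hx => if_neg (by simp only [Finset.mem_Ico] at hx; omega)),
      Finset.prod_const, Nat.card_Ico]

lemma part2 (N : ℕ) (k : ℝ) (hk0 : 0 ≤ k) (hk1 : k ≤ 1) :
    (Measure.pi fun _ : Fin (N+1) => (volume : Measure ℝ).restrict (Set.Icc 0 1))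
        {a : Fin (N+1) → ℝ | (∀ j : Fin (N+1), (j : ℕ) < N → a j < k ∧ a j < a (Fin.last N)) ∧
          ∀ i, a i ≤ a (Fin.last N)}
        = ENNReal.ofReal (k ^ N - N * k ^ (N+1) / (N+1)) := by
  have hmeas : MeasurableSet {a : Fin (N+1) → ℝ |
      (∀ j : Fin (N+1), (j : ℕ) < N → a j < k ∧ a j < a (Fin.last N)) ∧
      ∀ i, a i ≤ a (Fin.last N)} := by
    have h1 : MeasurableSet {a : Fin (N+1) → ℝ |
        ∀ j : Fin (N+1), (j : ℕ) < N → a j < k ∧ a j < a (Fin.last N)} := by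
      rw [Set.setOf_forall]
      apply MeasurableSet.iInter
      intro j
      by_cases hj : (j : ℕ) < N
      · simp only [hj, forall_true_left]
        exact (measurableSet_lt (measurable_pi_apply j) measurable_const).inter
          (measurableSet_lt (measurable_pi_apply j) (measurable_pi_apply _))
      · simp only [hj, false_implies, setOf_true]
        exact MeasurableSet.univ
    have h2 : MeasurableSet {a : Fin (N+1) → ℝ | ∀ i, a i ≤ a (Fin.last N)} := by
      rw [Set.setOf_forall]
      exact MeasurableSet.iInter fun i =>
        measurableSet_le (measurable_pi_apply i) (measurable_pi_apply _)
    exact h1.inter h2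
  rw [pi_slice (Fin.last N) hmeas]
  have hslice : ∀ x : ℝ, {y : Fin N → ℝ | Fin.insertNth (Fin.last N) x y ∈
      {a : Fin (N+1) → ℝ | (∀ j : Fin (N+1), (j : ℕ) < N → a j < k ∧ a j < a (Fin.last N)) ∧
        ∀ i, a i ≤ a (Fin.last N)}} = Set.pi Set.univ (fun _ : Fin N => Set.Iio (min k x)) := by
    intro x
    ext y
    simp only [Set.mem_setOf_eq, Set.mem_pi, Set.mem_univ, forall_true_left, Set.mem_Iio,
      lt_min_iff]
    rw [Fin.forall_iff_succAbove (Fin.last N), Fin.forall_iff_succAbove (Fin.last N)]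
    have hs : ∀ j : Fin N, ((Fin.last N).succAbove j : ℕ) = (j : ℕ) := fun j => by
      simp [Fin.succAbove_last]
    simp only [Fin.insertNth_apply_same, Fin.insertNth_apply_succAbove, Fin.val_last,
      lt_irrefl, false_implies, le_refl, true_and, hs, Fin.is_lt, forall_true_left]
    constructor
    · rintro ⟨h1, h2⟩ j
      exact h1 j
    · intro h
      exact ⟨fun j => h j, fun j => (h j).2.le⟩
  have hint : ∀ x ∈ Set.Icc (0:ℝ) 1,
      (Measure.pi fun _ : Fin N => (volume : Measure ℝ).restrict (Set.Icc 0 1))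
        {y : Fin N → ℝ | Fin.insertNth (Fin.last N) x y ∈
          {a : Fin (N+1) → ℝ | (∀ j : Fin (N+1), (j : ℕ) < N → a j < k ∧ a j < a (Fin.last N)) ∧
            ∀ i, a i ≤ a (Fin.last N)}}
        = ENNReal.ofReal (min k x ^ N) := by
    intro x hx
    rw [hslice x, Measure.pi_pi, mu0_Iio (le_min hk0 hx.1) ((min_le_left _ _).trans hk1),
      Finset.prod_const, Finset.card_univ, Fintype.card_fin, ← ENNReal.ofReal_pow (le_min hk0 hx.1)]
  rw [setLIntegral_congr_fun measurableSet_Icc hint]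
  have hcont : Continuous fun x : ℝ => min k x ^ N := (continuous_const.min continuous_id).pow N
  rw [← ofReal_integral_eq_lintegral_ofReal hcont.integrableOn_Icc
    ((ae_restrict_iff' measurableSet_Icc).2 (ae_of_all _ fun x hx =>
      pow_nonneg (le_min hk0 hx.1) N))]
  have h01 : (0:ℝ) ≤ 1 := zero_le_one
  rw [integral_Icc_eq_integral_Ioc, ← intervalIntegral.integral_of_le h01,
    ← intervalIntegral.integral_add_adjacent_intervals (b := k)
      (hcont.intervalIntegrable 0 k) (hcont.intervalIntegrable k 1)]
  have e1 : ∫ x in (0:ℝ)..k, min k x ^ N = ∫ x in (0:ℝ)..k, x ^ N :=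
    intervalIntegral.integral_congr fun x hx => by
      rw [Set.uIcc_of_le hk0] at hx; rw [min_eq_right hx.2]
  have e2 : ∫ x in k..(1:ℝ), min k x ^ N = ∫ x in k..(1:ℝ), k ^ N :=
    intervalIntegral.integral_congr fun x hx => by
      rw [Set.uIcc_of_le hk1] at hx; rw [min_eq_left hx.1]
  rw [e1, e2, integral_pow, intervalIntegral.integral_const]
  congr 1
  have hN : ((N:ℝ) + 1) ≠ 0 := by positivity
  field_simp
  ring

lemma part1 (N t : ℕ) (ht : t < N) (k : ℝ) (hk0 : 0 ≤ k) (hk1 : k ≤ 1) :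
    (Measure.pi fun _ : Fin (N+1) => (volume : Measure ℝ).restrict (Set.Icc 0 1))
        {a : Fin (N+1) → ℝ | (∀ j : Fin (N+1), (j : ℕ) < t → a j < k) ∧
          k ≤ a ⟨t, by omega⟩ ∧ ∀ i, a i ≤ a ⟨t, by omega⟩}
        = ENNReal.ofReal (k ^ t * ((1 - k ^ (N - t + 1)) / ((N - t : ℕ) + 1))) := by
  classical
  set i : Fin (N+1) := ⟨t, by omega⟩ with hi
  have hmeas : MeasurableSet {a : Fin (N+1) → ℝ | (∀ j : Fin (N+1), (j : ℕ) < t → a j < k) ∧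
      k ≤ a i ∧ ∀ i', a i' ≤ a i} := by
    have h1 : MeasurableSet {a : Fin (N+1) → ℝ | ∀ j : Fin (N+1), (j : ℕ) < t → a j < k} := by
      rw [Set.setOf_forall]
      apply MeasurableSet.iInter
      intro j
      by_cases hj : (j : ℕ) < t
      · simp only [hj, forall_true_left]
        exact measurableSet_lt (measurable_pi_apply j) measurable_const
      · simp only [hj, false_implies, setOf_true]
        exact MeasurableSet.univ
    have h2 : MeasurableSet {a : Fin (N+1) → ℝ | k ≤ a i} :=
      measurableSet_le measurable_const (measurable_pi_apply i)
    have h3 : MeasurableSet {a : Fin (N+1) → ℝ | ∀ i', a i' ≤ a i} := by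
      rw [Set.setOf_forall]
      exact MeasurableSet.iInter fun i' =>
        measurableSet_le (measurable_pi_apply i') (measurable_pi_apply _)
    exact h1.inter (h2.inter h3)
  rw [pi_slice i hmeas]
  have hs : ∀ j : Fin N, ((i.succAbove j : ℕ) < t ↔ (j : ℕ) < t) := by
    intro j
    rcases lt_or_ge (j : ℕ) t with h | h
    · rw [Fin.succAbove_of_castSucc_lt _ _ (by simp [Fin.lt_def, hi, h])]
      simp [h]
    · rw [Fin.succAbove_of_le_castSucc _ _ (by simp [Fin.le_def, hi, h])]
      simp only [Fin.val_succ]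
      omega
  have hint : ∀ x ∈ Set.Icc (0:ℝ) 1,
      (Measure.pi fun _ : Fin N => (volume : Measure ℝ).restrict (Set.Icc 0 1))
        {y : Fin N → ℝ | i.insertNth x y ∈
          {a : Fin (N+1) → ℝ | (∀ j : Fin (N+1), (j : ℕ) < t → a j < k) ∧
            k ≤ a i ∧ ∀ i', a i' ≤ a i}}
        = Set.indicator (Set.Ici k) (fun x => ENNReal.ofReal (k ^ t * x ^ (N - t))) x := by
    intro x hx
    by_cases hkx : k ≤ x
    · have hset : {y : Fin N → ℝ | i.insertNth x y ∈
          {a : Fin (N+1) → ℝ | (∀ j : Fin (N+1), (j : ℕ) < t → a j < k) ∧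
            k ≤ a i ∧ ∀ i', a i' ≤ a i}}
          = Set.pi Set.univ (fun j : Fin N => if (j : ℕ) < t then Set.Iio k else Set.Iic x) := by
        ext y
        simp only [Set.mem_setOf_eq, Set.mem_pi, Set.mem_univ, forall_true_left]
        rw [Fin.forall_iff_succAbove i, Fin.forall_iff_succAbove i]
        simp only [Fin.insertNth_apply_same, Fin.insertNth_apply_succAbove, hs, hi,
          lt_irrefl, false_implies, le_refl, true_and]
        constructor
        · rintro ⟨h1, _, h3⟩ j
          by_cases hj : (j : ℕ) < t
          · simp only [hj, if_pos]
            exact h1 j ((hs j).2 hj)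
          · simp only [hj, if_neg, not_false_iff]
            exact h3 j
        · intro h
          refine ⟨fun j hj => by simpa [(hs j).1 hj] using h j, hkx, fun j => ?_⟩
          by_cases hj : (j : ℕ) < t
          · have := h j; simp only [hj, if_pos] at this
            exact le_trans this.le (le_trans hkx le_rfl)
          · have := h j; simpa [hj] using this
      rw [hset, Measure.pi_pi]
      have : ∀ j : Fin N,
          (volume : Measure ℝ).restrict (Set.Icc 0 1)
            (if (j : ℕ) < t then Set.Iio k else Set.Iic x)
          = if (j : ℕ) < t then ENNReal.ofReal k else ENNReal.ofReal x := by
        intro j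
        by_cases hj : (j : ℕ) < t
        · simp only [hj, if_pos]
          exact mu0_Iio hk0 hk1
        · simp only [hj, if_neg, not_false_iff]
          exact mu0_Iic hx.1 hx.2
      rw [Finset.prod_congr rfl fun j _ => this j, prod_ite_lt N t ht.le,
        ← ENNReal.ofReal_pow hk0, ← ENNReal.ofReal_pow (hk0.trans hkx),
        ← ENNReal.ofReal_mul (pow_nonneg hk0 _)]
      exact (Set.indicator_of_mem hkx fun x => ENNReal.ofReal (k ^ t * x ^ (N - t))).symm
    · have hset : {y : Fin N → ℝ | i.insertNth x y ∈
          {a : Fin (N+1) → ℝ | (∀ j : Fin (N+1), (j : ℕ) < t → a j < k) ∧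
            k ≤ a i ∧ ∀ i', a i' ≤ a i}} = ∅ := by
        ext y
        simp only [Set.mem_setOf_eq, Set.mem_empty_iff_false, iff_false, not_and]
        intro _ h2
        rw [Fin.insertNth_apply_same] at h2
        exact absurd h2 hkx
      rw [hset, measure_empty]
      exact (Set.indicator_of_notMem hkx fun x => ENNReal.ofReal (k ^ t * x ^ (N - t))).symm
  rw [setLIntegral_congr_fun measurableSet_Icc hint,
    lintegral_indicator measurableSet_Ici, Measure.restrict_restrict measurableSet_Ici]
  have hIcc : Set.Ici k ∩ Set.Icc (0:ℝ) 1 = Set.Icc k 1 := by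
    ext x
    simp only [Set.mem_inter_iff, Set.mem_Ici, Set.mem_Icc]
    constructor
    · rintro ⟨h1, _, h3⟩; exact ⟨h1, h3⟩
    · rintro ⟨h1, h2⟩; exact ⟨h1, hk0.trans h1, h2⟩
  rw [hIcc]
  have hcont : Continuous fun x : ℝ => k ^ t * x ^ (N - t) :=
    continuous_const.mul (continuous_pow _)
  rw [← ofReal_integral_eq_lintegral_ofReal hcont.integrableOn_Icc
    ((ae_restrict_iff' measurableSet_Icc).2 (ae_of_all _ fun x hx =>
      mul_nonneg (pow_nonneg hk0 _) (pow_nonneg (hk0.trans hx.1) _)))]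
  rw [integral_Icc_eq_integral_Ioc, ← intervalIntegral.integral_of_le hk1,
    intervalIntegral.integral_const_mul, integral_pow, one_pow]

/-- Identical-decision-number strategy on `n` draws (decision number `k` for rounds
`1,…,n-1`, decision number `0` at round `n`): the probability of winning at round `r`
(`1 ≤ r ≤ n-1`), i.e. of continuing past rounds `1,…,r-1` (each earlier draw below `k` and
not the maximum of all `n` draws) and then accepting the overall maximum `a_r ≥ k`, equals
`k^(r-1)/(n-r+1) - k^n/(n-r+1)`; and the probability of winning at round `n` equals
`k^(n-1) - (n-1)·k^n/n`. -/
theorem identical_k_round_win_probs (n : ℕ) (hn : 2 ≤ n) (k : ℝ)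
    (hk : k ∈ Set.Icc (0 : ℝ) 1) :
    (∀ r : ℕ, ∀ _hr1 : 1 ≤ r, ∀ _hr2 : r ≤ n - 1,
      (Measure.pi fun _ : Fin n => (volume : Measure ℝ).restrict (Set.Icc 0 1))
        {a | (∀ j : Fin n, (j : ℕ) < r - 1 → a j < k ∧ ∃ i, a j < a i) ∧
          k ≤ a ⟨r - 1, by omega⟩ ∧ ∀ i, a i ≤ a ⟨r - 1, by omega⟩}
        = ENNReal.ofReal (k ^ (r - 1) / (n - r + 1) - k ^ n / (n - r + 1)))
    ∧ (Measure.pi fun _ : Fin n => (volume : Measure ℝ).restrict (Set.Icc 0 1))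
        {a | (∀ j : Fin n, (j : ℕ) < n - 1 → a j < k ∧ ∃ i, a j < a i) ∧
          ∀ i, a i ≤ a ⟨n - 1, by omega⟩}
        = ENNReal.ofReal (k ^ (n - 1) - (n - 1) * k ^ n / n) := by
  obtain ⟨hk0, hk1⟩ := hk
  obtain ⟨N, rfl⟩ : ∃ N, n = N + 1 := ⟨n - 1, by omega⟩
  constructor
  · intro r hr1 hr2
    have htN : r - 1 < N := by omega
    have hset : {a : Fin (N+1) → ℝ |
        (∀ j : Fin (N+1), (j : ℕ) < r - 1 → a j < k ∧ ∃ i, a j < a i) ∧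
          k ≤ a ⟨r - 1, by omega⟩ ∧ ∀ i, a i ≤ a ⟨r - 1, by omega⟩}
        = {a : Fin (N+1) → ℝ | (∀ j : Fin (N+1), (j : ℕ) < r - 1 → a j < k) ∧
          k ≤ a ⟨r - 1, by omega⟩ ∧ ∀ i, a i ≤ a ⟨r - 1, by omega⟩} := by
      ext a
      simp only [Set.mem_setOf_eq]
      constructor
      · rintro ⟨h1, h2, h3⟩
        exact ⟨fun j hj => (h1 j hj).1, h2, h3⟩
      · rintro ⟨h1, h2, h3⟩
        exact ⟨fun j hj => ⟨h1 j hj, ⟨_, lt_of_lt_of_le (h1 j hj) h2⟩⟩, h2, h3⟩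
    rw [hset, part1 N (r - 1) htN k hk0 hk1]
    congr 1
    have e1 : (N - (r - 1) : ℕ) = N + 1 - r := by omega
    have e2 : ((N - (r - 1) : ℕ) : ℝ) = ((N : ℝ) + 1) - r := by
      rw [e1, Nat.cast_sub (by omega : r ≤ N + 1)]
      push_cast
      ring
    have hpow : k ^ (r - 1) * k ^ (N - (r - 1) + 1) = k ^ (N + 1) := by
      rw [← pow_add]
      congr 1
      omega
    have hrle : (r : ℝ) ≤ (N : ℝ) + 1 := by exact_mod_cast (by omega : r ≤ N + 1)
    have hd : ((N : ℝ) + 1) - r + 1 ≠ 0 := by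
      have : (0:ℝ) < ((N : ℝ) + 1) - r + 1 := by linarith
      linarith
    rw [e2]
    push_cast
    rw [show k ^ (r - 1) * ((1 - k ^ (N - (r - 1) + 1)) / ((N : ℝ) + 1 - r + 1))
        = (k ^ (r - 1) - k ^ (N + 1)) / ((N : ℝ) + 1 - r + 1) by rw [← hpow]; ring,
      sub_div]
  · have hset2 : {a : Fin (N+1) → ℝ |
        (∀ j : Fin (N+1), (j : ℕ) < N + 1 - 1 → a j < k ∧ ∃ i, a j < a i) ∧
          ∀ i, a i ≤ a ⟨N + 1 - 1, by omega⟩}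
        = {a : Fin (N+1) → ℝ |
          (∀ j : Fin (N+1), (j : ℕ) < N → a j < k ∧ a j < a (Fin.last N)) ∧
          ∀ i, a i ≤ a (Fin.last N)} := by
      ext a
      simp only [Set.mem_setOf_eq]
      constructor
      · rintro ⟨h1, h2⟩
        refine ⟨fun j hj => ⟨(h1 j hj).1, ?_⟩, h2⟩
        obtain ⟨i0, hi0⟩ := (h1 j hj).2
        exact lt_of_lt_of_le hi0 (h2 i0)
      · rintro ⟨h1, h2⟩
        exact ⟨fun j hj => ⟨(h1 j hj).1, ⟨Fin.last N, (h1 j hj).2⟩⟩, h2⟩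
    rw [hset2, part2 N k hk0 hk1]
    congr 1
    simp only [Nat.add_sub_cancel]
    push_cast
    ring
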